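/- Let 2 ≤ t ≤ n, n = (t+1)p + d with 0 ≤ d ≤ t, and i ≤ j < n. If β_{i,j}(R/I_t(C_n)) ≠ 0, then j ≤ it. -/

import Mathlib

open Finset

def SC.facesC (Δ : Set (Finset ℕ)) (c : ℤ) : Type :=
  {F : Finset ℕ // F ∈ Δ ∧ (F.card : ℤ) = c}

open Classical in
noncomputable def SC.bdry (K : Type) [Field K] (Δ : Set (Finset ℕ)) (a b : ℤ) :
    (SC.facesC Δ a →₀ K) →ₗ[K] (SC.facesC Δ b →₀ K) :=
  Finsupp.lsum K fun F => LinearMap.toSpanSingleton K _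
    (∑ x ∈ F.1, if h : F.1.erase x ∈ Δ ∧ (((F.1.erase x).card : ℤ) = b)
      then ((-1 : K) ^ (F.1.filter (fun y => y < x)).card) •
        Finsupp.single (⟨F.1.erase x, h⟩ : SC.facesC Δ b) (1 : K)
      else 0)

noncomputable def SC.hdim (K : Type) [Field K] (Δ : Set (Finset ℕ)) (i : ℤ) : ℕ :=
  Module.finrank K (LinearMap.ker (SC.bdry K Δ (i + 1) i)) -
    Module.finrank K (LinearMap.range (SC.bdry K Δ (i + 2) (i + 1)))

def SC.gen (S : Set (Finset ℕ)) : Set (Finset ℕ) := {F | ∃ A ∈ S, F ⊆ A}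

/-- The facet `F_a = {x_a, …, x_{a+t-1}}` (indices mod `n`, vertices `0, …, n-1`). -/
def cycForm (n t a : ℕ) : Finset ℕ := (Finset.range t).image (fun k => (a + k) % n)

/-- The facets of the path complex `Δ_t(C_n)` of the cycle. -/
def cycFacets (n t : ℕ) : Finset (Finset ℕ) := (Finset.range n).image (cycForm n t)

/-- The Stanley–Reisner complex on vertex set `{0,…,n-1}` of the squarefree monomial ideal
whose minimal generators have supports `Gens`. -/
def SRcomplex (n : ℕ) (Gens : Finset (Finset ℕ)) : Set (Finset ℕ) :=
  {F | F ⊆ Finset.range n ∧ ¬ ∃ G ∈ Gens, G ⊆ F}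

open Classical in
/-- The graded Betti number `β_{i,j}(R/I)` of the squarefree monomial ideal
`I ⊆ K[x_0,…,x_{n-1}]` with generator supports `Gens`, characterized by
Hochster's formula: `β_{i,j}(R/I) = Σ_{W, |W| = j} dim_K H̃_{j-i-1}((Δ_I)|_W; K)`. -/
noncomputable def betti (K : Type) [Field K] (n : ℕ) (Gens : Finset (Finset ℕ)) (i j : ℕ) : ℕ :=
  ∑ W ∈ (Finset.range n).powersetCard j,
    SC.hdim K {F | F ∈ SRcomplex n Gens ∧ F ⊆ W} ((j : ℤ) - i - 1)

/-- Betti numbers of `R/I_t(C_n)`. -/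
noncomputable def bettiCycle (K : Type) [Field K] (n t i j : ℕ) : ℕ :=
  betti K n (cycFacets n t) i j

/-- The facets of a run of length `s` (for path length `t`) starting at vertex `a`:
`F_i = {a+i, …, a+i+t-1}` for `0 ≤ i < s`. -/
def runFacets (t a s : ℕ) : Set (Finset ℕ) := {F | ∃ i < s, F = Finset.Ico (a + i) (a + i + t)}

/-- Facets of a disjoint union of runs of lengths `L`, laid out left to right starting
at vertex `a`, with a gap between consecutive runs. -/
def runsFacets (t : ℕ) : ℕ → List ℕ → Set (Finset ℕ)
  | _, [] => ∅
  | a, s :: L => runFacets t a s ∪ runsFacets t (a + s + t) L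

/-- Vertex set of the above disjoint union of runs (a run of length `s` has `s+t-1` vertices). -/
def runsVerts (t : ℕ) : ℕ → List ℕ → Finset ℕ
  | _, [] => ∅
  | a, s :: L => Finset.Ico a (a + s + t - 1) ∪ runsVerts t (a + s + t) L

/-- `E(s_1,…,s_r)`: the complex generated by the complements, within the total vertex set,
of the facets of a disjoint union of runs of lengths `s_1, …, s_r`. -/
def EC (t : ℕ) (L : List ℕ) : Set (Finset ℕ) :=
  SC.gen {G | ∃ F ∈ runsFacets t 0 L, G = runsVerts t 0 L \ F}


namespace SCP
open Finsupp

variable {K : Type} [Field K] {Δ : Set (Finset ℕ)}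

noncomputable def sgn (K : Type) [Field K] (F : Finset ℕ) (x : ℕ) : K :=
  (-1) ^ (F.filter (fun y => y < x)).card

lemma sgn_erase_of_le {G : Finset ℕ} {u w : ℕ} (h : w ≤ u) :
    sgn K (G.erase u) w = sgn K G w := by
  unfold sgn
  rw [Finset.filter_erase, Finset.erase_eq_of_notMem]
  simp only [Finset.mem_filter]
  exact fun hh => absurd hh.2 (by omega)

lemma sgn_erase_of_lt {G : Finset ℕ} {u w : ℕ} (hu : u ∈ G) (h : u < w) :
    sgn K (G.erase u) w = - sgn K G w := by
  unfold sgn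
  rw [Finset.filter_erase, Finset.card_erase_of_mem (by simp [Finset.mem_filter, hu, h])]
  have hc : 1 ≤ (G.filter (fun y => y < w)).card :=
    Finset.card_pos.mpr ⟨u, by simp [Finset.mem_filter, hu, h]⟩
  obtain ⟨k, hk⟩ : ∃ k, (G.filter (fun y => y < w)).card = k + 1 :=
    ⟨(G.filter (fun y => y < w)).card - 1, by omega⟩
  rw [hk]
  simp [pow_succ]

lemma sgn_insert_of_le {G : Finset ℕ} {u w : ℕ} (h : w ≤ u) :
    sgn K (insert u G) w = sgn K G w := by
  unfold sgn
  rw [Finset.filter_insert, if_neg (show ¬ u < w by omega)]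

lemma sgn_insert_of_lt {G : Finset ℕ} {u w : ℕ} (hu : u ∉ G) (h : u < w) :
    sgn K (insert u G) w = - sgn K G w := by
  unfold sgn
  rw [Finset.filter_insert, if_pos h, Finset.card_insert_of_notMem (by simp [hu])]
  ring

lemma sgn_mul_self (F : Finset ℕ) (x : ℕ) : sgn K F x * sgn K F x = 1 := by
  unfold sgn
  rw [← pow_add, ← two_mul, pow_mul]
  norm_num

lemma sgn_skew {F : Finset ℕ} {x y : ℕ} (hx : x ∈ F) (hy : y ∈ F) (hxy : x ≠ y) :
    sgn K F x * sgn K (F.erase x) y = -(sgn K F y * sgn K (F.erase y) x) := by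
  rcases lt_or_gt_of_ne hxy with h | h
  · rw [sgn_erase_of_lt hx h, sgn_erase_of_le (le_of_lt h)]
    ring
  · rw [sgn_erase_of_le (le_of_lt h), sgn_erase_of_lt hy h]
    ring

def DC (Δ : Set (Finset ℕ)) : Prop := ∀ F ∈ Δ, ∀ x, F.erase x ∈ Δ

lemma card_erase_int {F : Finset ℕ} {a : ℤ} (hF : (F.card : ℤ) = a) {x : ℕ} (hx : x ∈ F) :
    (((F.erase x).card : ℕ) : ℤ) = a - 1 := by
  have h1 : 1 ≤ F.card := Finset.card_pos.mpr ⟨x, hx⟩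
  rw [Finset.card_erase_of_mem hx]
  omega

/-- The face `F - x`, as an element of the faces of cardinality `b = a - 1`. -/
def dface (hDC : DC Δ) {a b : ℤ} (hb : b = a - 1) (F : SC.facesC Δ a) (x : {y // y ∈ F.1}) :
    SC.facesC Δ b :=
  ⟨F.1.erase ↑x, hDC _ F.2.1 _, by rw [hb]; exact card_erase_int F.2.2 x.2⟩

lemma dface_val (hDC : DC Δ) {a b : ℤ} (hb : b = a - 1) (F : SC.facesC Δ a)
    (x : {y // y ∈ F.1}) : (dface hDC hb F x).1 = F.1.erase ↑x := rfl

lemma sgl_congr {c : ℤ} {s t : Finset ℕ} (h : s = t) (ps : s ∈ Δ ∧ (s.card : ℤ) = c)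
    (pt : t ∈ Δ ∧ (t.card : ℤ) = c) :
    (Finsupp.single (⟨s, ps⟩ : SC.facesC Δ c) (1:K)) = Finsupp.single ⟨t, pt⟩ 1 := by
  subst h; rfl

lemma lhom_ext1 {α : Type} {M : Type} [AddCommGroup M] [Module K M]
    {f g : (α →₀ K) →ₗ[K] M}
    (h : ∀ a, f (Finsupp.single a 1) = g (Finsupp.single a 1)) : f = g :=
  Finsupp.lhom_ext fun a b => by
    rw [← Finsupp.smul_single_one, map_smul, map_smul, h]

lemma bdry_single (hDC : DC Δ) {a b : ℤ} (hb : b = a - 1) (F : SC.facesC Δ a) :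
    SC.bdry K Δ a b (Finsupp.single F 1) =
      ∑ x ∈ F.1.attach, sgn K F.1 ↑x • Finsupp.single (dface hDC hb F x) (1:K) := by
  subst hb
  rw [SC.bdry]
  simp only [Finsupp.coe_lsum, Finsupp.sum_single_index, LinearMap.map_zero,
    LinearMap.toSpanSingleton_apply_one]
  rw [← Finset.sum_attach]
  refine Finset.sum_congr rfl fun x _ => ?_
  refine (dif_pos (⟨hDC _ F.2.1 _, card_erase_int F.2.2 x.2⟩ :
    F.1.erase ↑x ∈ Δ ∧ (((F.1.erase ↑x).card : ℕ) : ℤ) = a - 1)).trans ?_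
  rfl

end SCP

namespace SCP
open Finsupp

variable {K : Type} [Field K] {Δ : Set (Finset ℕ)}

def dd (hDC : DC Δ) {a c : ℤ} (hc : c = a - 1 - 1) (F : SC.facesC Δ a) {x y : ℕ}
    (h : x ∈ F.1 ∧ y ∈ F.1.erase x) : SC.facesC Δ c :=
  ⟨(F.1.erase x).erase y, hDC _ (hDC _ F.2.1 _) _, by
    rw [hc]; exact card_erase_int (card_erase_int F.2.2 h.1) h.2⟩

open Classical in
noncomputable def g2 (K : Type) [Field K] {Δ : Set (Finset ℕ)} (hDC : DC Δ) {a c : ℤ}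
    (hc : c = a - 1 - 1) (F : SC.facesC Δ a) (p : Σ _ : ℕ, ℕ) : SC.facesC Δ c →₀ K :=
  if h : p.1 ∈ F.1 ∧ p.2 ∈ F.1.erase p.1 then
    (sgn K F.1 p.1 * sgn K (F.1.erase p.1) p.2) • Finsupp.single (dd hDC hc F h) (1:K)
  else 0

lemma g2_pos (hDC : DC Δ) {a c : ℤ} (hc : c = a - 1 - 1) (F : SC.facesC Δ a) {x y : ℕ}
    (h : x ∈ F.1 ∧ y ∈ F.1.erase x) :
    g2 K hDC hc F ⟨x, y⟩ =
      (sgn K F.1 x * sgn K (F.1.erase x) y) • Finsupp.single (dd hDC hc F h) (1:K) := by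
  rw [g2, dif_pos h]

lemma g2_add_swap (hDC : DC Δ) {a c : ℤ} (hc : c = a - 1 - 1) (F : SC.facesC Δ a)
    {x y : ℕ} (hx : x ∈ F.1) (hy : y ∈ F.1) (hxy : x ≠ y) :
    g2 K hDC hc F ⟨x, y⟩ + g2 K hDC hc F ⟨y, x⟩ = 0 := by
  have h1 : x ∈ F.1 ∧ y ∈ F.1.erase x := ⟨hx, Finset.mem_erase.mpr ⟨hxy.symm, hy⟩⟩
  have h2 : y ∈ F.1 ∧ x ∈ F.1.erase y := ⟨hy, Finset.mem_erase.mpr ⟨hxy, hx⟩⟩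
  rw [g2_pos hDC hc F h1, g2_pos hDC hc F h2]
  have hd : dd hDC hc F h2 = dd hDC hc F h1 :=
    Subtype.ext (Finset.erase_right_comm (s := F.1) (a := y) (b := x))
  rw [hd, ← add_smul, sgn_skew hx hy hxy, neg_add_cancel, zero_smul]

lemma bdry_step (hDC : DC Δ) {a b c : ℤ} (hb : b = a - 1) (hc : c = b - 1)
    (hac : c = a - 1 - 1) (F : SC.facesC Δ a) (x : {y // y ∈ F.1}) :
    SC.bdry K Δ b c (sgn K F.1 ↑x • Finsupp.single (dface hDC hb F x) (1:K)) =
      ∑ y ∈ F.1.erase ↑x, g2 K hDC hac F ⟨↑x, y⟩ := by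
  rw [map_smul, bdry_single hDC hc, Finset.smul_sum]
  refine Eq.trans ?_ (Finset.sum_attach (F.1.erase ↑x) (fun y => g2 K hDC hac F ⟨↑x, y⟩))
  refine Finset.sum_congr rfl fun y _ => ?_
  rw [g2_pos hDC hac F ⟨x.2, y.2⟩]
  rw [smul_smul]
  rfl

lemma bdry_bdry (hDC : DC Δ) {a b c : ℤ} (hb : b = a - 1) (hc : c = b - 1)
    (z : SC.facesC Δ a →₀ K) :
    SC.bdry K Δ b c (SC.bdry K Δ a b z) = 0 := by
  have hac : c = a - 1 - 1 := by omega
  have key : (SC.bdry K Δ b c).comp (SC.bdry K Δ a b) = 0 := by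
    apply lhom_ext1
    intro F
    simp only [LinearMap.comp_apply, LinearMap.zero_apply]
    rw [bdry_single hDC hb, map_sum]
    rw [Finset.sum_congr rfl (fun x _ => bdry_step hDC hb hc hac F x)]
    rw [Finset.sum_attach F.1 (fun x => ∑ y ∈ F.1.erase x, g2 K hDC hac F ⟨x, y⟩)]
    rw [← Finset.sum_sigma F.1 (fun x => F.1.erase x) (g2 K hDC hac F)]
    refine Finset.sum_involution (fun p _ => ⟨p.2, p.1⟩) ?_ ?_ ?_ ?_
    · rintro ⟨x, y⟩ hp
      simp only [Finset.mem_sigma, Finset.mem_erase] at hp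
      exact g2_add_swap hDC hac F hp.1 hp.2.2 (fun h => hp.2.1 h.symm)
    · rintro ⟨x, y⟩ hp _
      simp only [Finset.mem_sigma, Finset.mem_erase] at hp
      intro hE
      exact hp.2.1 (congrArg Sigma.fst hE)
    · rintro ⟨x, y⟩ hp
      simp only [Finset.mem_sigma, Finset.mem_erase] at hp ⊢
      exact ⟨hp.2.2, fun h => hp.2.1 h.symm, hp.1⟩
    · rintro ⟨x, y⟩ _
      rfl
  exact LinearMap.congr_fun key z

end SCP

namespace SCP
open Finsupp

variable {K : Type} [Field K] {Δ : Set (Finset ℕ)}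

def BND (Δ : Set (Finset ℕ)) (V : Finset ℕ) : Prop := ∀ F ∈ Δ, F ⊆ V

lemma facesC_finite {V : Finset ℕ} (hB : BND Δ V) (a : ℤ) : Finite (SC.facesC Δ a) := by
  refine Finite.of_injective (fun F => (⟨F.1, Finset.mem_powerset.mpr (hB F.1 F.2.1)⟩ :
    {s // s ∈ V.powerset})) ?_
  intro F G h
  rw [Subtype.mk_eq_mk] at h
  exact Subtype.ext h

lemma hdim_zero_of_no_faces {c : ℤ} (h : IsEmpty (SC.facesC Δ (c+1))) : SC.hdim K Δ c = 0 := by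
  rw [SC.hdim]
  have : Subsingleton (SC.facesC Δ (c+1) →₀ K) := by infer_instance
  have hker : Module.finrank K (LinearMap.ker (SC.bdry K Δ (c + 1) c)) = 0 := by
    have : Subsingleton (LinearMap.ker (SC.bdry K Δ (c + 1) c)) :=
      ⟨fun x y => Subtype.ext (Subsingleton.elim _ _)⟩
    exact Module.finrank_zero_of_subsingleton
  omega

lemma hdim_zero_of_ker_le {V : Finset ℕ} (hB : BND Δ V) {c : ℤ}
    (h : LinearMap.ker (SC.bdry K Δ (c+1) c) ≤ LinearMap.range (SC.bdry K Δ (c+2) (c+1))) :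
    SC.hdim K Δ c = 0 := by
  have h1 := facesC_finite hB (c+1)
  have h2 := facesC_finite hB c
  have : Module.Finite K (SC.facesC Δ (c+1) →₀ K) := by infer_instance
  have : Module.Finite K (SC.facesC Δ c →₀ K) := by infer_instance
  rw [SC.hdim]
  have := Submodule.finrank_mono h
  omega

lemma range_le_ker (hDC : DC Δ) (c : ℤ) :
    LinearMap.range (SC.bdry K Δ (c+2) (c+1)) ≤ LinearMap.ker (SC.bdry K Δ (c+1) c) := by
  rintro z ⟨w, rfl⟩
  exact LinearMap.mem_ker.mpr (bdry_bdry hDC (by ring) (by ring) w)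

lemma ker_eq_range_of_hdim_zero {V : Finset ℕ} (hB : BND Δ V) (hDC : DC Δ) {c : ℤ}
    (h : SC.hdim K Δ c = 0) :
    LinearMap.ker (SC.bdry K Δ (c+1) c) = LinearMap.range (SC.bdry K Δ (c+2) (c+1)) := by
  have h1 := facesC_finite hB (c+1)
  have h2 := facesC_finite hB c
  have : Module.Finite K (SC.facesC Δ (c+1) →₀ K) := by infer_instance
  have : Module.Finite K (SC.facesC Δ c →₀ K) := by infer_instance
  rw [SC.hdim] at h
  have hle := range_le_ker (K := K) hDC c
  have hfr : Module.finrank K (LinearMap.ker (SC.bdry K Δ (c+1) c)) ≤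
      Module.finrank K (LinearMap.range (SC.bdry K Δ (c+2) (c+1))) := by
    have := Submodule.finrank_mono hle
    omega
  exact (Submodule.eq_of_le_of_finrank_le hle hfr).symm

end SCP

namespace SCP
open Finsupp

variable {K : Type} [Field K] {Δ : Set (Finset ℕ)} {v : ℕ}

def Cone (Δ : Set (Finset ℕ)) (v : ℕ) : Prop := ∀ F ∈ Δ, insert v F ∈ Δ

lemma card_insert_int {F : Finset ℕ} {a : ℤ} (hF : (F.card : ℤ) = a) {v : ℕ} (hv : v ∉ F) :
    (((insert v F).card : ℕ) : ℤ) = a + 1 := by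
  rw [Finset.card_insert_of_notMem hv]
  push_cast
  omega

/-- The face `F ∪ {v}` for `v ∉ F`. -/
def iface (hv : Cone Δ v) {a b : ℤ} (hb : b = a + 1) (F : SC.facesC Δ a) (h : v ∉ F.1) :
    SC.facesC Δ b :=
  ⟨insert v F.1, hv _ F.2.1, by rw [hb]; exact card_insert_int F.2.2 h⟩

lemma iface_val (hv : Cone Δ v) {a b : ℤ} (hb : b = a + 1) (F : SC.facesC Δ a) (h : v ∉ F.1) :
    (iface hv hb F h).1 = insert v F.1 := rfl

/-- `(F ∪ {v}) - x`, a face of the same cardinality as `F`. -/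
def fA (hDC : DC Δ) (hv : Cone Δ v) {a : ℤ} (F : SC.facesC Δ a) (h : v ∉ F.1) (x : ℕ)
    (h' : x ∈ insert v F.1) : SC.facesC Δ a :=
  ⟨(insert v F.1).erase x, hDC _ (hv _ F.2.1) x, by
    have := card_erase_int (card_insert_int F.2.2 h) h'
    omega⟩

/-- `(F - x) ∪ {v}` for `v ∉ F - x`, a face of the same cardinality as `F`. -/
def fB (hDC : DC Δ) (hv : Cone Δ v) {a : ℤ} (F : SC.facesC Δ a) (x : ℕ)
    (h' : x ∈ F.1) (hm : v ∉ F.1.erase x) : SC.facesC Δ a :=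
  ⟨insert v (F.1.erase x), hv _ (hDC _ F.2.1 x), by
    have := card_insert_int (card_erase_int F.2.2 h') hm
    omega⟩

open Classical in
/-- Cone chain homotopy. -/
noncomputable def hmap (K : Type) [Field K] {Δ : Set (Finset ℕ)} {v : ℕ} (hv : Cone Δ v)
    {a b : ℤ} (hb : b = a + 1) : (SC.facesC Δ a →₀ K) →ₗ[K] (SC.facesC Δ b →₀ K) :=
  Finsupp.lsum K fun F => LinearMap.toSpanSingleton K _
    (if h : v ∈ F.1 then 0 else sgn K F.1 v • Finsupp.single (iface hv hb F h) (1:K))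

lemma hmap_single_pos (hv : Cone Δ v) {a b : ℤ} (hb : b = a + 1) (F : SC.facesC Δ a)
    (h : v ∈ F.1) : hmap K hv hb (Finsupp.single F 1) = 0 := by
  rw [hmap]
  simp only [Finsupp.coe_lsum, Finsupp.sum_single_index, LinearMap.map_zero,
    LinearMap.toSpanSingleton_apply_one]
  rw [dif_pos h]

lemma hmap_single_neg (hv : Cone Δ v) {a b : ℤ} (hb : b = a + 1) (F : SC.facesC Δ a)
    (h : v ∉ F.1) :
    hmap K hv hb (Finsupp.single F 1) = sgn K F.1 v • Finsupp.single (iface hv hb F h) (1:K) := by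
  rw [hmap]
  simp only [Finsupp.coe_lsum, Finsupp.sum_single_index, LinearMap.map_zero,
    LinearMap.toSpanSingleton_apply_one]
  rw [dif_neg h]

section ConeSums

variable (K)

open Classical in
/-- Terms of `∂ ∘ h` (case `v ∉ F`). -/
noncomputable def pA (hDC : DC Δ) (hv : Cone Δ v) {a : ℤ} (F : SC.facesC Δ a) (h : v ∉ F.1)
    (x : ℕ) : SC.facesC Δ a →₀ K :=
  if h' : x ∈ insert v F.1 then
    (sgn K F.1 v * sgn K (insert v F.1) x) • Finsupp.single (fA hDC hv F h x h') (1:K)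
  else 0

open Classical in
/-- Terms of `h ∘ ∂` (case `v ∉ F`). -/
noncomputable def qB (hDC : DC Δ) (hv : Cone Δ v) {a : ℤ} (F : SC.facesC Δ a) (h : v ∉ F.1)
    (x : ℕ) : SC.facesC Δ a →₀ K :=
  if h' : x ∈ F.1 then
    (sgn K F.1 x * sgn K (F.1.erase x) v) • Finsupp.single
      (fB hDC hv F x h' (fun hm => h (Finset.mem_of_mem_erase hm))) (1:K)
  else 0

open Classical in
/-- Terms of `h ∘ ∂` (case `v ∈ F`). -/
noncomputable def pC (hDC : DC Δ) (hv : Cone Δ v) {a : ℤ} (F : SC.facesC Δ a)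
    (x : ℕ) : SC.facesC Δ a →₀ K :=
  if h' : x ∈ F.1 then
    (if hm : v ∈ F.1.erase x then 0 else
      (sgn K F.1 x * sgn K (F.1.erase x) v) • Finsupp.single (fB hDC hv F x h' hm) (1:K))
  else 0

end ConeSums

lemma cone_sign {F : Finset ℕ} {x v : ℕ} (hx : x ∈ F) (hv : v ∉ F) :
    sgn K F v * sgn K (insert v F) x = -(sgn K F x * sgn K (F.erase x) v) := by
  have hxv : x ≠ v := fun h => hv (h ▸ hx)
  rcases lt_or_gt_of_ne hxv with h | h
  · rw [sgn_insert_of_le (le_of_lt h), sgn_erase_of_lt hx h]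
    ring
  · rw [sgn_insert_of_lt hv h, sgn_erase_of_le (le_of_lt h)]
    ring

lemma cone_id (hDC : DC Δ) (hv : Cone Δ v) {a b c : ℤ} (hb : b = a + 1) (hc : c = a - 1)
    (F : SC.facesC Δ a) :
    SC.bdry K Δ b a (hmap K hv hb (Finsupp.single F 1)) +
      hmap K hv (show a = c + 1 by omega) (SC.bdry K Δ a c (Finsupp.single F 1)) =
      Finsupp.single F 1 := by
  by_cases hvF : v ∈ F.1
  · -- v ∈ F : first term is 0, second term gives back F via the x = v summand
    rw [hmap_single_pos hv hb F hvF, map_zero, zero_add]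
    rw [bdry_single hDC (show c = a - 1 from hc), map_sum]
    have step : ∀ x : {y // y ∈ F.1},
        hmap K hv (show a = c + 1 by omega) (sgn K F.1 ↑x • Finsupp.single
          (dface hDC (show c = a - 1 from hc) F x) (1:K)) = pC K hDC hv F ↑x := by
      intro x
      rw [map_smul]
      by_cases hm : v ∈ F.1.erase ↑x
      · rw [hmap_single_pos hv _ _ hm, smul_zero, pC, dif_pos x.2, dif_pos hm]
      · rw [hmap_single_neg hv _ _ hm, pC, dif_pos x.2, dif_neg hm, smul_smul]
        rfl
    rw [Finset.sum_congr rfl (fun x _ => step x),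
      Finset.sum_attach F.1 (pC K hDC hv F),
      ← Finset.add_sum_erase F.1 (pC K hDC hv F) hvF]
    have hPCv : pC K hDC hv F v = Finsupp.single F 1 := by
      rw [pC, dif_pos hvF, dif_neg (Finset.notMem_erase v F.1)]
      have h2 : fB hDC hv F v hvF (Finset.notMem_erase v F.1) = F :=
        Subtype.ext (Finset.insert_erase hvF)
      rw [h2, sgn_erase_of_le (le_refl v), sgn_mul_self, one_smul]
    have hrest : ∀ x ∈ F.1.erase v, pC K hDC hv F x = 0 := by
      intro x hx
      rw [Finset.mem_erase] at hx
      rw [pC, dif_pos hx.2, dif_pos (Finset.mem_erase.mpr ⟨fun h => hx.1 h.symm, hvF⟩)]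
    rw [hPCv, Finset.sum_congr rfl hrest, Finset.sum_const_zero, add_zero]
  · -- v ∉ F
    rw [hmap_single_neg hv hb F hvF, map_smul,
      bdry_single hDC (show a = b - 1 by omega), Finset.smul_sum]
    have stepA : ∀ x : {y // y ∈ (iface hv hb F hvF).1},
        sgn K F.1 v • (sgn K (iface hv hb F hvF).1 ↑x • Finsupp.single
          (dface hDC (show a = b - 1 by omega) (iface hv hb F hvF) x) (1:K)) =
        pA K hDC hv F hvF ↑x := by
      intro x
      rw [pA, dif_pos (show (↑x : ℕ) ∈ insert v F.1 from x.2), smul_smul]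
      rfl
    rw [Finset.sum_congr rfl (fun x _ => stepA x),
      Finset.sum_attach ((iface hv hb F hvF).1) (pA K hDC hv F hvF),
      iface_val hv hb F hvF,
      ← Finset.add_sum_erase (insert v F.1) (pA K hDC hv F hvF) (Finset.mem_insert_self v F.1),
      Finset.erase_insert hvF]
    have hPAv : pA K hDC hv F hvF v = Finsupp.single F 1 := by
      rw [pA, dif_pos (Finset.mem_insert_self v F.1)]
      have h2 : fA hDC hv F hvF v (Finset.mem_insert_self v F.1) = F :=
        Subtype.ext (Finset.erase_insert hvF)
      rw [h2, sgn_insert_of_le (le_refl v), sgn_mul_self, one_smul]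
    rw [hPAv]
    -- second summand
    rw [bdry_single hDC (show c = a - 1 from hc), map_sum]
    have stepB : ∀ x : {y // y ∈ F.1},
        hmap K hv (show a = c + 1 by omega) (sgn K F.1 ↑x • Finsupp.single
          (dface hDC (show c = a - 1 from hc) F x) (1:K)) = qB K hDC hv F hvF ↑x := by
      intro x
      rw [map_smul, hmap_single_neg hv _ _ (fun hm => hvF (Finset.mem_of_mem_erase hm)),
        qB, dif_pos x.2, smul_smul]
      rfl
    rw [Finset.sum_congr rfl (fun x _ => stepB x), Finset.sum_attach F.1 (qB K hDC hv F hvF)]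
    have hcancel : ∀ x ∈ F.1, pA K hDC hv F hvF x + qB K hDC hv F hvF x = 0 := by
      intro x hx
      have hxv : x ≠ v := fun h => hvF (h ▸ hx)
      rw [pA, dif_pos (Finset.mem_insert_of_mem hx), qB, dif_pos hx]
      have h2 : fA hDC hv F hvF x (Finset.mem_insert_of_mem hx) =
          fB hDC hv F x hx (fun hm => hvF (Finset.mem_of_mem_erase hm)) :=
        Subtype.ext (Finset.erase_insert_of_ne hxv.symm)
      rw [h2, ← add_smul, cone_sign hx hvF, neg_add_cancel, zero_smul]
    have hz : ∑ x ∈ F.1, pA K hDC hv F hvF x + ∑ x ∈ F.1, qB K hDC hv F hvF x = 0 := by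
      rw [← Finset.sum_add_distrib, Finset.sum_congr rfl hcancel, Finset.sum_const_zero]
    rw [add_assoc, hz, add_zero]

lemma cone_hdim_zero {V : Finset ℕ} (hB : BND Δ V) (hDC : DC Δ) (hv : Cone Δ v) (c : ℤ) :
    SC.hdim K Δ c = 0 := by
  by_cases hc : c + 1 < 0
  · refine hdim_zero_of_no_faces ⟨fun F => ?_⟩
    have h1 := F.2.2
    have h2 : (0:ℤ) ≤ (F.1.card : ℤ) := Int.natCast_nonneg _
    omega
  · refine hdim_zero_of_ker_le hB ?_
    intro z hz
    rw [LinearMap.mem_ker] at hz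
    have hid : (SC.bdry K Δ (c+2) (c+1)).comp (hmap K hv (show c + 2 = (c+1) + 1 by ring)) +
        (hmap K hv (show c + 1 = c + 1 by ring)).comp (SC.bdry K Δ (c+1) c) =
        LinearMap.id := by
      apply lhom_ext1
      intro F
      simp only [LinearMap.add_apply, LinearMap.comp_apply, LinearMap.id_apply]
      exact cone_id hDC hv (by ring) (by ring) F
    have hz2 := LinearMap.congr_fun hid z
    simp only [LinearMap.add_apply, LinearMap.comp_apply, LinearMap.id_apply, hz,
      map_zero, add_zero] at hz2
    exact ⟨hmap K hv (show c + 2 = (c+1) + 1 by ring) z, hz2⟩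

end SCP

namespace SCP
open Finsupp

variable {K : Type} [Field K] {Δ : Set (Finset ℕ)} {v : ℕ}

def delC (Δ : Set (Finset ℕ)) (v : ℕ) : Set (Finset ℕ) := {F | F ∈ Δ ∧ v ∉ F}

def lkC (Δ : Set (Finset ℕ)) (v : ℕ) : Set (Finset ℕ) := {F | v ∉ F ∧ insert v F ∈ Δ}

lemma DC_del (hDC : DC Δ) : DC (delC Δ v) := fun F hF x =>
  ⟨hDC F hF.1 x, fun hm => hF.2 (Finset.mem_of_mem_erase hm)⟩

lemma DC_lk (hDC : DC Δ) : DC (lkC Δ v) := by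
  intro F hF x
  refine ⟨fun hm => hF.1 (Finset.mem_of_mem_erase hm), ?_⟩
  by_cases hxv : x = v
  · subst hxv
    rw [Finset.erase_eq_of_notMem hF.1]
    exact hF.2
  · rw [← Finset.erase_insert_of_ne (fun h => hxv h.symm)]
    exact hDC _ hF.2 x

lemma BND_del {V : Finset ℕ} (hB : BND Δ V) : BND (delC Δ v) V := fun F hF => hB F hF.1

lemma BND_lk {V : Finset ℕ} (hB : BND Δ V) : BND (lkC Δ v) V := fun F hF =>
  fun x hx => hB _ hF.2 (Finset.mem_insert_of_mem hx)

def dl {a : ℤ} (F : SC.facesC (delC Δ v) a) : SC.facesC Δ a := ⟨F.1, F.2.1.1, F.2.2⟩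

def rface {a : ℤ} (F : SC.facesC Δ a) (h : v ∉ F.1) : SC.facesC (delC Δ v) a :=
  ⟨F.1, ⟨F.2.1, h⟩, F.2.2⟩

def lface {a b : ℤ} (hb : b = a - 1) (F : SC.facesC Δ a) (h : v ∈ F.1) :
    SC.facesC (lkC Δ v) b :=
  ⟨F.1.erase v, ⟨Finset.notMem_erase v F.1, by rw [Finset.insert_erase h]; exact F.2.1⟩,
    by rw [hb]; exact card_erase_int F.2.2 h⟩

def sface {a b : ℤ} (hb : b = a + 1) (G : SC.facesC (lkC Δ v) a) : SC.facesC Δ b :=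
  ⟨insert v G.1, G.2.1.2, by rw [hb]; exact card_insert_int G.2.2 G.2.1.1⟩

noncomputable def ιm (K : Type) [Field K] (Δ : Set (Finset ℕ)) (v : ℕ) (a : ℤ) :
    (SC.facesC (delC Δ v) a →₀ K) →ₗ[K] (SC.facesC Δ a →₀ K) :=
  Finsupp.lsum K fun F => LinearMap.toSpanSingleton K _ (Finsupp.single (dl F) (1:K))

open Classical in
noncomputable def ρm (K : Type) [Field K] (Δ : Set (Finset ℕ)) (v : ℕ) (a : ℤ) :
    (SC.facesC Δ a →₀ K) →ₗ[K] (SC.facesC (delC Δ v) a →₀ K) :=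
  Finsupp.lsum K fun F => LinearMap.toSpanSingleton K _
    (if h : v ∈ F.1 then 0 else Finsupp.single (rface F h) (1:K))

open Classical in
noncomputable def πm (K : Type) [Field K] (Δ : Set (Finset ℕ)) (v : ℕ) {a b : ℤ}
    (hb : b = a - 1) : (SC.facesC Δ a →₀ K) →ₗ[K] (SC.facesC (lkC Δ v) b →₀ K) :=
  Finsupp.lsum K fun F => LinearMap.toSpanSingleton K _
    (if h : v ∈ F.1 then sgn K F.1 v • Finsupp.single (lface hb F h) (1:K) else 0)

noncomputable def σm (K : Type) [Field K] (Δ : Set (Finset ℕ)) (v : ℕ) {a b : ℤ}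
    (hb : b = a + 1) : (SC.facesC (lkC Δ v) a →₀ K) →ₗ[K] (SC.facesC Δ b →₀ K) :=
  Finsupp.lsum K fun G => LinearMap.toSpanSingleton K _
    (sgn K G.1 v • Finsupp.single (sface hb G) (1:K))

lemma ιm_single {a : ℤ} (F : SC.facesC (delC Δ v) a) :
    ιm K Δ v a (Finsupp.single F 1) = Finsupp.single (dl F) (1:K) := by
  rw [ιm]
  simp [Finsupp.sum_single_index, LinearMap.toSpanSingleton_apply_one]

lemma ρm_single_pos {a : ℤ} (F : SC.facesC Δ a) (h : v ∈ F.1) :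
    ρm K Δ v a (Finsupp.single F 1) = 0 := by
  rw [ρm]
  simp only [Finsupp.coe_lsum, Finsupp.sum_single_index, LinearMap.map_zero,
    LinearMap.toSpanSingleton_apply_one]
  rw [dif_pos h]

lemma ρm_single_neg {a : ℤ} (F : SC.facesC Δ a) (h : v ∉ F.1) :
    ρm K Δ v a (Finsupp.single F 1) = Finsupp.single (rface F h) (1:K) := by
  rw [ρm]
  simp only [Finsupp.coe_lsum, Finsupp.sum_single_index, LinearMap.map_zero,
    LinearMap.toSpanSingleton_apply_one]
  rw [dif_neg h]

lemma πm_single_pos {a b : ℤ} (hb : b = a - 1) (F : SC.facesC Δ a) (h : v ∈ F.1) :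
    πm K Δ v hb (Finsupp.single F 1) = sgn K F.1 v • Finsupp.single (lface hb F h) (1:K) := by
  rw [πm]
  simp only [Finsupp.coe_lsum, Finsupp.sum_single_index, LinearMap.map_zero,
    LinearMap.toSpanSingleton_apply_one]
  rw [dif_pos h]

lemma πm_single_neg {a b : ℤ} (hb : b = a - 1) (F : SC.facesC Δ a) (h : v ∉ F.1) :
    πm K Δ v hb (Finsupp.single F 1) = 0 := by
  rw [πm]
  simp only [Finsupp.coe_lsum, Finsupp.sum_single_index, LinearMap.map_zero,
    LinearMap.toSpanSingleton_apply_one]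
  rw [dif_neg h]

lemma σm_single {a b : ℤ} (hb : b = a + 1) (G : SC.facesC (lkC Δ v) a) :
    σm K Δ v hb (Finsupp.single G 1) = sgn K G.1 v • Finsupp.single (sface hb G) (1:K) := by
  rw [σm]
  simp [Finsupp.sum_single_index, LinearMap.toSpanSingleton_apply_one]

/-- `ι` is a chain map. -/
lemma M1 (hDC : DC Δ) {a b : ℤ} (hb : b = a - 1) :
    (SC.bdry K Δ a b).comp (ιm K Δ v a) = (ιm K Δ v b).comp (SC.bdry K (delC Δ v) a b) := by
  apply lhom_ext1
  intro F
  simp only [LinearMap.comp_apply]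
  rw [ιm_single, bdry_single hDC hb, bdry_single (DC_del hDC) hb, map_sum]
  refine Finset.sum_congr rfl fun x _ => ?_
  rw [map_smul, ιm_single]
  rfl

/-- `ρ ∘ ι = id`. -/
lemma M5 (a : ℤ) : (ρm K Δ v a).comp (ιm K Δ v a) = LinearMap.id := by
  apply lhom_ext1
  intro F
  simp only [LinearMap.comp_apply, LinearMap.id_apply]
  rw [ιm_single, ρm_single_neg (dl F) F.2.1.2]
  have h2 : rface (v := v) (dl F) F.2.1.2 = F := Subtype.ext rfl
  rw [h2]

/-- `π ∘ σ = id`. -/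
lemma M4 {a b : ℤ} (hb : b = a + 1) (hb' : a = b - 1) :
    (πm K Δ v hb').comp (σm K Δ v hb) = LinearMap.id := by
  apply lhom_ext1
  intro G
  simp only [LinearMap.comp_apply, LinearMap.id_apply]
  rw [σm_single, map_smul, πm_single_pos hb' (sface hb G) (Finset.mem_insert_self v G.1)]
  have h1 : sgn K (sface hb G).1 v = sgn K G.1 v := sgn_insert_of_le (le_refl v)
  have h2 : lface hb' (sface hb G) (Finset.mem_insert_self v G.1) = G :=
    Subtype.ext (Finset.erase_insert G.2.1.1)
  rw [h1, h2, smul_smul, sgn_mul_self, one_smul]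

/-- `ι ∘ ρ + σ ∘ π = id`. -/
lemma M3 {a b : ℤ} (hb : b = a - 1) (hb' : a = b + 1) :
    (ιm K Δ v a).comp (ρm K Δ v a) + (σm K Δ v hb').comp (πm K Δ v hb) = LinearMap.id := by
  apply lhom_ext1
  intro F
  simp only [LinearMap.add_apply, LinearMap.comp_apply, LinearMap.id_apply]
  by_cases h : v ∈ F.1
  · rw [ρm_single_pos F h, map_zero, πm_single_pos hb F h, map_smul, σm_single, zero_add]
    have h1 : sgn K (lface hb F h).1 v = sgn K F.1 v := sgn_erase_of_le (le_refl v)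
    have h2 : sface hb' (lface hb F h) = F := Subtype.ext (Finset.insert_erase h)
    rw [h1, h2, smul_smul, sgn_mul_self, one_smul]
  · rw [ρm_single_neg F h, πm_single_neg hb F h, map_zero, add_zero, ιm_single]
    have h2 : dl (rface F h) = F := Subtype.ext rfl
    rw [h2]

end SCP

namespace SCP
open Finsupp

variable {K : Type} [Field K] {Δ : Set (Finset ℕ)} {v : ℕ}

lemma lface_val {a b : ℤ} (hb : b = a - 1) (F : SC.facesC Δ a) (h : v ∈ F.1) :
    (lface (v := v) hb F h).1 = F.1.erase v := rfl

section M2defs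
variable (K)

open Classical in
noncomputable def rA (hDC : DC Δ) {a b c : ℤ} (hb : b = a - 1) (hc : c = b - 1)
    (F : SC.facesC Δ a) (hvF : v ∈ F.1) (x : ℕ) : SC.facesC (lkC Δ v) c →₀ K :=
  if h' : x ∈ (lface (v := v) hb F hvF).1 then
    (sgn K F.1 v * sgn K (F.1.erase v) x) •
      Finsupp.single (dface (DC_lk hDC) hc (lface hb F hvF) ⟨x, h'⟩) (1:K)
  else 0

open Classical in
noncomputable def rB (hDC : DC Δ) {a b c : ℤ} (hb : b = a - 1) (hc : c = b - 1)
    (F : SC.facesC Δ a) (x : ℕ) : SC.facesC (lkC Δ v) c →₀ K :=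
  if h' : x ∈ F.1 then
    if hm : v ∈ F.1.erase x then
      (sgn K F.1 x * sgn K (F.1.erase x) v) •
        Finsupp.single (lface hc (dface hDC hb F ⟨x, h'⟩) hm) (1:K)
    else 0
  else 0

end M2defs

/-- `π` is an anti-chain map. -/
lemma M2 (hDC : DC Δ) {a b c : ℤ} (hb : b = a - 1) (hc : c = b - 1) :
    (SC.bdry K (lkC Δ v) b c).comp (πm K Δ v hb) =
      - (πm K Δ v hc).comp (SC.bdry K Δ a b) := by
  apply lhom_ext1
  intro F
  simp only [LinearMap.comp_apply, LinearMap.neg_apply]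
  by_cases hvF : v ∈ F.1
  · rw [πm_single_pos hb F hvF, map_smul,
      bdry_single (DC_lk hDC) hc (lface hb F hvF), Finset.smul_sum]
    have stepA : ∀ x : {y // y ∈ (lface (v := v) hb F hvF).1},
        sgn K F.1 v • (sgn K (lface (v := v) hb F hvF).1 ↑x • Finsupp.single
          (dface (DC_lk hDC) hc (lface hb F hvF) x) (1:K)) = rA K hDC hb hc F hvF ↑x := by
      intro x
      rw [rA, dif_pos x.2, smul_smul]
      rfl
    rw [Finset.sum_congr rfl (fun x _ => stepA x),
      Finset.sum_attach ((lface (v := v) hb F hvF).1) (rA K hDC hb hc F hvF),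
      lface_val hb F hvF]
    -- now the right-hand side
    rw [bdry_single hDC hb, map_sum]
    have stepB : ∀ x : {y // y ∈ F.1},
        πm K Δ v hc (sgn K F.1 ↑x • Finsupp.single (dface hDC hb F x) (1:K)) =
          rB K hDC hb hc F ↑x := by
      intro x
      rw [map_smul]
      by_cases hm : v ∈ F.1.erase ↑x
      · rw [πm_single_pos hc _ hm, rB, dif_pos x.2, dif_pos hm, smul_smul]
        rfl
      · rw [πm_single_neg hc _ hm, smul_zero, rB, dif_pos x.2, dif_neg hm]
    rw [Finset.sum_congr rfl (fun x _ => stepB x), Finset.sum_attach F.1 (rB K hDC hb hc F),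
      ← Finset.add_sum_erase F.1 (rB K hDC hb hc F) hvF]
    have hrBv : rB (v := v) K hDC hb hc F v = 0 := by
      rw [rB, dif_pos hvF, dif_neg (Finset.notMem_erase v F.1)]
    have hpt : ∀ x ∈ F.1.erase v, rA K hDC hb hc F hvF x = - rB K hDC hb hc F x := by
      intro x hx
      rw [Finset.mem_erase] at hx
      have hm : v ∈ F.1.erase x := Finset.mem_erase.mpr ⟨fun h => hx.1 h.symm, hvF⟩
      rw [rA, dif_pos (show x ∈ (lface (v := v) hb F hvF).1 from
          Finset.mem_erase.mpr ⟨hx.1, hx.2⟩),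
        rB, dif_pos hx.2, dif_pos hm]
      have h2 : dface (DC_lk hDC) hc (lface (v := v) hb F hvF)
            ⟨x, Finset.mem_erase.mpr ⟨hx.1, hx.2⟩⟩ =
          lface hc (dface hDC hb F ⟨x, hx.2⟩) hm :=
        Subtype.ext (Finset.erase_right_comm (s := F.1) (a := v) (b := x))
      rw [h2, sgn_skew hvF hx.2 (fun h => hx.1 h.symm), neg_smul]
    rw [Finset.sum_congr rfl hpt, hrBv, zero_add, ← Finset.sum_neg_distrib]
  · rw [πm_single_neg hb F hvF, map_zero, bdry_single hDC hb, map_sum]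
    have stepC : ∀ x : {y // y ∈ F.1},
        πm K Δ v hc (sgn K F.1 ↑x • Finsupp.single (dface hDC hb F x) (1:K)) = 0 := by
      intro x
      rw [map_smul, πm_single_neg hc _ (fun hm => hvF (Finset.mem_of_mem_erase hm)), smul_zero]
    rw [Finset.sum_congr rfl (fun x _ => stepC x), Finset.sum_const_zero, neg_zero]

end SCP

namespace SCP
open Finsupp

variable {K : Type} [Field K] {Δ : Set (Finset ℕ)} {v : ℕ}

lemma ker_eq_range_of_hdim_zero' {V : Finset ℕ} (hB : BND Δ V) (hDC : DC Δ) {c a b : ℤ}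
    (ha : a = c + 1) (hb : b = c + 2) (h : SC.hdim K Δ c = 0) :
    LinearMap.ker (SC.bdry K Δ a c) = LinearMap.range (SC.bdry K Δ b a) := by
  subst ha
  subst hb
  exact ker_eq_range_of_hdim_zero hB hDC h

lemma chase {V : Finset ℕ} (hB : BND Δ V) (hDC : DC Δ) (c : ℤ)
    (hdel : SC.hdim K (delC Δ v) c = 0) (hlk : SC.hdim K (lkC Δ v) (c-1) = 0) :
    SC.hdim K Δ c = 0 := by
  refine hdim_zero_of_ker_le hB ?_
  intro z hz
  rw [LinearMap.mem_ker] at hz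
  have hlk' : LinearMap.ker (SC.bdry K (lkC Δ v) c (c-1)) =
      LinearMap.range (SC.bdry K (lkC Δ v) (c+1) c) :=
    ker_eq_range_of_hdim_zero' (BND_lk hB) (DC_lk hDC)
      (show c = (c-1) + 1 by ring) (show c+1 = (c-1) + 2 by ring) hlk
  have hdel' : LinearMap.ker (SC.bdry K (delC Δ v) (c+1) c) =
      LinearMap.range (SC.bdry K (delC Δ v) (c+2) (c+1)) :=
    ker_eq_range_of_hdim_zero (BND_del hB) (DC_del hDC) hdel
  -- the image of z in the link is a cycle
  have h1 : SC.bdry K (lkC Δ v) c (c-1) (πm K Δ v (show c = (c+1) - 1 by ring) z) = 0 := by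
    have h := LinearMap.congr_fun
      (M2 (K := K) (v := v) hDC (show c = (c+1) - 1 by ring) (show c - 1 = c - 1 from rfl)) z
    simp only [LinearMap.comp_apply, LinearMap.neg_apply] at h
    rw [h, hz, map_zero, neg_zero]
  obtain ⟨w, hw⟩ : πm K Δ v (show c = (c+1) - 1 by ring) z ∈
      LinearMap.range (SC.bdry K (lkC Δ v) (c+1) c) := hlk' ▸ LinearMap.mem_ker.mpr h1
  -- correct z by the boundary of a lift of w
  have hπ2s : πm K Δ v (show c+1 = (c+2) - 1 by ring)
      (σm K Δ v (show c+2 = (c+1) + 1 by ring) w) = w :=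
    LinearMap.congr_fun (M4 (show c+2 = (c+1) + 1 by ring) (show c+1 = (c+2) - 1 by ring)) w
  have hM2s := LinearMap.congr_fun
    (M2 (K := K) (v := v) hDC (show c+1 = (c+2) - 1 by ring) (show c = (c+1) - 1 by ring))
    (σm K Δ v (show c+2 = (c+1) + 1 by ring) w)
  simp only [LinearMap.comp_apply, LinearMap.neg_apply] at hM2s
  rw [hπ2s, hw] at hM2s
  -- hM2s : π1 z = - π1 (∂ (σ2 w))
  have h2 : πm K Δ v (show c = (c+1) - 1 by ring)
      (z + SC.bdry K Δ (c+2) (c+1) (σm K Δ v (show c+2 = (c+1) + 1 by ring) w)) = 0 := by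
    rw [map_add, hM2s]
    abel
  -- pull back to the deletion
  have hιu : ιm K Δ v (c+1) (ρm K Δ v (c+1)
        (z + SC.bdry K Δ (c+2) (c+1) (σm K Δ v (show c+2 = (c+1) + 1 by ring) w))) =
      z + SC.bdry K Δ (c+2) (c+1) (σm K Δ v (show c+2 = (c+1) + 1 by ring) w) := by
    have hM3 := LinearMap.congr_fun
      (M3 (K := K) (Δ := Δ) (v := v) (show c = (c+1) - 1 by ring) (show c+1 = c + 1 by ring))
      (z + SC.bdry K Δ (c+2) (c+1) (σm K Δ v (show c+2 = (c+1) + 1 by ring) w))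
    simp only [LinearMap.add_apply, LinearMap.comp_apply, LinearMap.id_apply] at hM3
    rw [h2, map_zero, add_zero] at hM3
    exact hM3
  have hdu : SC.bdry K (delC Δ v) (c+1) c (ρm K Δ v (c+1)
      (z + SC.bdry K Δ (c+2) (c+1) (σm K Δ v (show c+2 = (c+1) + 1 by ring) w))) = 0 := by
    have hM1 := LinearMap.congr_fun (M1 (K := K) (v := v) hDC (show c = (c+1) - 1 by ring))
      (ρm K Δ v (c+1)
        (z + SC.bdry K Δ (c+2) (c+1) (σm K Δ v (show c+2 = (c+1) + 1 by ring) w)))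
    simp only [LinearMap.comp_apply] at hM1
    rw [hιu] at hM1
    have hzz : SC.bdry K Δ (c+1) c
        (z + SC.bdry K Δ (c+2) (c+1) (σm K Δ v (show c+2 = (c+1) + 1 by ring) w)) = 0 := by
      rw [map_add, hz, zero_add]
      exact bdry_bdry hDC (by ring) (by ring) _
    rw [hzz] at hM1
    have hM5 := LinearMap.congr_fun (M5 (K := K) (Δ := Δ) (v := v) c)
      (SC.bdry K (delC Δ v) (c+1) c (ρm K Δ v (c+1)
        (z + SC.bdry K Δ (c+2) (c+1) (σm K Δ v (show c+2 = (c+1) + 1 by ring) w))))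
    simp only [LinearMap.comp_apply, LinearMap.id_apply] at hM5
    rw [← hM5, ← hM1, map_zero]
  obtain ⟨y, hy⟩ : ρm K Δ v (c+1)
      (z + SC.bdry K Δ (c+2) (c+1) (σm K Δ v (show c+2 = (c+1) + 1 by ring) w)) ∈
      LinearMap.range (SC.bdry K (delC Δ v) (c+2) (c+1)) :=
    hdel' ▸ LinearMap.mem_ker.mpr hdu
  refine ⟨ιm K Δ v (c+2) y - σm K Δ v (show c+2 = (c+1) + 1 by ring) w, ?_⟩
  have hM1' := LinearMap.congr_fun (M1 (K := K) (v := v) hDC (show c+1 = (c+2) - 1 by ring)) y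
  simp only [LinearMap.comp_apply] at hM1'
  rw [map_sub, hM1', hy, hιu]
  abel

end SCP

namespace SCP
open Finsupp

variable {K : Type} [Field K]

noncomputable def tau (K : Type) [Field K] (G₀ F : Finset ℕ) : K :=
  ∏ u ∈ G₀, sgn K (F \ G₀) u

lemma tau_mul_self (G₀ F : Finset ℕ) : tau K G₀ F * tau K G₀ F = 1 := by
  rw [tau, ← Finset.prod_mul_distrib]
  rw [Finset.prod_congr rfl (fun u _ => sgn_mul_self (K := K) (F \ G₀) u)]
  exact Finset.prod_const_one

lemma filter_lt_split {G₀ : Finset ℕ} {x : ℕ} (hx : x ∉ G₀) :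
    (G₀.filter (fun u => u < x)).card + (G₀.filter (fun u => x < u)).card = G₀.card := by
  have h1 : G₀.filter (fun u => ¬ u < x) = G₀.filter (fun u => x < u) := by
    apply Finset.filter_congr
    intro u hu
    have : u ≠ x := fun h => hx (h ▸ hu)
    simp only [not_lt]
    omega
  rw [← h1]
  exact Finset.card_filter_add_card_filter_not (s := G₀) (p := fun u => u < x)

lemma sgn_of_sdiff {G₀ F : Finset ℕ} (hsub : G₀ ⊆ F) {x : ℕ} (hx : x ∈ F) (hxG : x ∉ G₀) :
    sgn K F x = sgn K (F \ G₀) x * (-1) ^ (G₀.filter (fun u => u < x)).card := by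
  unfold sgn
  rw [← pow_add]
  congr 1
  have hun : (F \ G₀) ∪ G₀ = F := Finset.sdiff_union_of_subset hsub
  have hdisj : Disjoint (F \ G₀) G₀ := Finset.sdiff_disjoint
  have hd2 : Disjoint ((F \ G₀).filter (fun y => y < x)) (G₀.filter (fun y => y < x)) :=
    Finset.disjoint_filter_filter hdisj
  conv_lhs => rw [← hun]
  rw [Finset.filter_union, Finset.card_union_of_disjoint hd2]

lemma tau_erase {G₀ F : Finset ℕ} (hsub : G₀ ⊆ F) {x : ℕ} (hx : x ∈ F) (hxG : x ∉ G₀) :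
    tau K G₀ (F.erase x) = (-1) ^ (G₀.filter (fun u => x < u)).card * tau K G₀ F := by
  unfold tau
  have he : (F.erase x) \ G₀ = (F \ G₀).erase x := (Finset.erase_sdiff_comm F G₀ x)
  rw [he]
  have hxm : x ∈ F \ G₀ := Finset.mem_sdiff.mpr ⟨hx, hxG⟩
  have step : ∀ u ∈ G₀, sgn K ((F \ G₀).erase x) u =
      (if x < u then (-1:K) else 1) * sgn K (F \ G₀) u := by
    intro u hu
    by_cases h : x < u
    · rw [if_pos h, sgn_erase_of_lt hxm h]
      ring
    · rw [if_neg h, sgn_erase_of_le (by omega), one_mul]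
  rw [Finset.prod_congr rfl step, Finset.prod_mul_distrib]
  congr 1
  rw [← Finset.prod_filter_mul_prod_filter_not G₀ (fun u => x < u)
    (fun u => if x < u then (-1:K) else 1)]
  have e1 : (∏ u ∈ G₀.filter (fun u => x < u), if x < u then (-1:K) else 1) =
      (-1:K) ^ (G₀.filter (fun u => x < u)).card := by
    rw [Finset.prod_congr rfl (fun u hu => if_pos (Finset.mem_filter.mp hu).2),
      Finset.prod_const]
  have e2 : (∏ u ∈ G₀.filter (fun u => ¬ x < u), if x < u then (-1:K) else 1) = 1 := by
    rw [Finset.prod_congr rfl (fun u hu => if_neg (Finset.mem_filter.mp hu).2)]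
    exact Finset.prod_const_one
  rw [e1, e2, mul_one]

/-- The key sign identity for the face-link chain map. -/
lemma tau_sign {G₀ F : Finset ℕ} (hsub : G₀ ⊆ F) {x : ℕ} (hx : x ∈ F) (hxG : x ∉ G₀) :
    sgn K F x * tau K G₀ (F.erase x) =
      (-1) ^ G₀.card * (tau K G₀ F * sgn K (F \ G₀) x) := by
  rw [sgn_of_sdiff hsub hx hxG, tau_erase hsub hx hxG, ← filter_lt_split hxG, pow_add]
  ring

end SCP

namespace SCP
open Finsupp

variable {K : Type} [Field K] {Δ' : Set (Finset ℕ)} {G₀ : Finset ℕ}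

def delF (Δ' : Set (Finset ℕ)) (G₀ : Finset ℕ) : Set (Finset ℕ) := {F | F ∈ Δ' ∧ ¬ G₀ ⊆ F}

def lkF (Δ' : Set (Finset ℕ)) (G₀ : Finset ℕ) : Set (Finset ℕ) :=
  {F | Disjoint F G₀ ∧ F ∪ G₀ ∈ Δ'}

lemma DC_delF (hDC : DC Δ') : DC (delF Δ' G₀) := fun F hF x =>
  ⟨hDC F hF.1 x, fun hs => hF.2 (hs.trans (Finset.erase_subset x F))⟩

lemma DC_lkF (hDC : DC Δ') : DC (lkF Δ' G₀) := by
  intro F hF x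
  refine ⟨Finset.disjoint_of_subset_left (Finset.erase_subset x F) hF.1, ?_⟩
  by_cases hx : x ∈ G₀
  · rw [Finset.erase_eq_of_notMem (fun hm => (Finset.disjoint_left.mp hF.1) hm hx)]
    exact hF.2
  · have he : F.erase x ∪ G₀ = (F ∪ G₀).erase x := by
      rw [Finset.erase_union_distrib, Finset.erase_eq_of_notMem hx]
    rw [he]
    exact hDC _ hF.2 x

lemma BND_delF {V : Finset ℕ} (hB : BND Δ' V) : BND (delF Δ' G₀) V := fun F hF => hB F hF.1

lemma BND_lkF {V : Finset ℕ} (hB : BND Δ' V) : BND (lkF Δ' G₀) V := fun F hF =>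
  (Finset.subset_union_left).trans (hB _ hF.2)

def dlF {a : ℤ} (F : SC.facesC (delF Δ' G₀) a) : SC.facesC Δ' a := ⟨F.1, F.2.1.1, F.2.2⟩

def rfaceF {a : ℤ} (F : SC.facesC Δ' a) (h : ¬ G₀ ⊆ F.1) : SC.facesC (delF Δ' G₀) a :=
  ⟨F.1, ⟨F.2.1, h⟩, F.2.2⟩

def lfaceF {a b : ℤ} (hb : b = a - (G₀.card : ℤ)) (F : SC.facesC Δ' a) (h : G₀ ⊆ F.1) :
    SC.facesC (lkF Δ' G₀) b :=
  ⟨F.1 \ G₀, ⟨Finset.sdiff_disjoint, by rw [Finset.sdiff_union_of_subset h]; exact F.2.1⟩, by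
    have h1 := F.2.2
    have h2 : G₀.card ≤ F.1.card := Finset.card_le_card h
    rw [Finset.card_sdiff_of_subset h]
    push_cast
    omega⟩

lemma lfaceF_val {a b : ℤ} (hb : b = a - (G₀.card : ℤ)) (F : SC.facesC Δ' a) (h : G₀ ⊆ F.1) :
    (lfaceF hb F h).1 = F.1 \ G₀ := rfl

def sfaceF {a b : ℤ} (hb : b = a + (G₀.card : ℤ)) (G : SC.facesC (lkF Δ' G₀) a) :
    SC.facesC Δ' b :=
  ⟨G.1 ∪ G₀, G.2.1.2, by
    have h1 := G.2.2
    rw [Finset.card_union_of_disjoint G.2.1.1]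
    push_cast
    omega⟩

noncomputable def ιF (K : Type) [Field K] (Δ' : Set (Finset ℕ)) (G₀ : Finset ℕ) (a : ℤ) :
    (SC.facesC (delF Δ' G₀) a →₀ K) →ₗ[K] (SC.facesC Δ' a →₀ K) :=
  Finsupp.lsum K fun F => LinearMap.toSpanSingleton K _ (Finsupp.single (dlF F) (1:K))

open Classical in
noncomputable def ρF (K : Type) [Field K] (Δ' : Set (Finset ℕ)) (G₀ : Finset ℕ) (a : ℤ) :
    (SC.facesC Δ' a →₀ K) →ₗ[K] (SC.facesC (delF Δ' G₀) a →₀ K) :=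
  Finsupp.lsum K fun F => LinearMap.toSpanSingleton K _
    (if h : G₀ ⊆ F.1 then 0 else Finsupp.single (rfaceF F h) (1:K))

open Classical in
noncomputable def πF (K : Type) [Field K] (Δ' : Set (Finset ℕ)) (G₀ : Finset ℕ) {a b : ℤ}
    (hb : b = a - (G₀.card : ℤ)) :
    (SC.facesC Δ' a →₀ K) →ₗ[K] (SC.facesC (lkF Δ' G₀) b →₀ K) :=
  Finsupp.lsum K fun F => LinearMap.toSpanSingleton K _
    (if h : G₀ ⊆ F.1 then tau K G₀ F.1 • Finsupp.single (lfaceF hb F h) (1:K) else 0)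

noncomputable def σF (K : Type) [Field K] (Δ' : Set (Finset ℕ)) (G₀ : Finset ℕ) {a b : ℤ}
    (hb : b = a + (G₀.card : ℤ)) :
    (SC.facesC (lkF Δ' G₀) a →₀ K) →ₗ[K] (SC.facesC Δ' b →₀ K) :=
  Finsupp.lsum K fun G => LinearMap.toSpanSingleton K _
    (tau K G₀ (G.1 ∪ G₀) • Finsupp.single (sfaceF hb G) (1:K))

lemma ιF_single {a : ℤ} (F : SC.facesC (delF Δ' G₀) a) :
    ιF K Δ' G₀ a (Finsupp.single F 1) = Finsupp.single (dlF F) (1:K) := by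
  rw [ιF]
  simp [Finsupp.sum_single_index, LinearMap.toSpanSingleton_apply_one]

lemma ρF_single_pos {a : ℤ} (F : SC.facesC Δ' a) (h : G₀ ⊆ F.1) :
    ρF K Δ' G₀ a (Finsupp.single F 1) = 0 := by
  rw [ρF]
  simp only [Finsupp.coe_lsum, Finsupp.sum_single_index, LinearMap.map_zero,
    LinearMap.toSpanSingleton_apply_one]
  rw [dif_pos h]

lemma ρF_single_neg {a : ℤ} (F : SC.facesC Δ' a) (h : ¬ G₀ ⊆ F.1) :
    ρF K Δ' G₀ a (Finsupp.single F 1) = Finsupp.single (rfaceF F h) (1:K) := by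
  rw [ρF]
  simp only [Finsupp.coe_lsum, Finsupp.sum_single_index, LinearMap.map_zero,
    LinearMap.toSpanSingleton_apply_one]
  rw [dif_neg h]

lemma πF_single_pos {a b : ℤ} (hb : b = a - (G₀.card : ℤ)) (F : SC.facesC Δ' a)
    (h : G₀ ⊆ F.1) : πF K Δ' G₀ hb (Finsupp.single F 1) =
      tau K G₀ F.1 • Finsupp.single (lfaceF hb F h) (1:K) := by
  rw [πF]
  simp only [Finsupp.coe_lsum, Finsupp.sum_single_index, LinearMap.map_zero,
    LinearMap.toSpanSingleton_apply_one]
  rw [dif_pos h]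

lemma πF_single_neg {a b : ℤ} (hb : b = a - (G₀.card : ℤ)) (F : SC.facesC Δ' a)
    (h : ¬ G₀ ⊆ F.1) : πF K Δ' G₀ hb (Finsupp.single F 1) = 0 := by
  rw [πF]
  simp only [Finsupp.coe_lsum, Finsupp.sum_single_index, LinearMap.map_zero,
    LinearMap.toSpanSingleton_apply_one]
  rw [dif_neg h]

lemma σF_single {a b : ℤ} (hb : b = a + (G₀.card : ℤ)) (G : SC.facesC (lkF Δ' G₀) a) :
    σF K Δ' G₀ hb (Finsupp.single G 1) =
      tau K G₀ (G.1 ∪ G₀) • Finsupp.single (sfaceF hb G) (1:K) := by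
  rw [σF]
  simp [Finsupp.sum_single_index, LinearMap.toSpanSingleton_apply_one]

/-- `ι` is a chain map. -/
lemma FM1 (hDC : DC Δ') {a b : ℤ} (hb : b = a - 1) :
    (SC.bdry K Δ' a b).comp (ιF K Δ' G₀ a) =
      (ιF K Δ' G₀ b).comp (SC.bdry K (delF Δ' G₀) a b) := by
  apply lhom_ext1
  intro F
  simp only [LinearMap.comp_apply]
  rw [ιF_single, bdry_single hDC hb, bdry_single (DC_delF hDC) hb, map_sum]
  refine Finset.sum_congr rfl fun x _ => ?_
  rw [map_smul, ιF_single]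
  rfl

/-- `ρ ∘ ι = id`. -/
lemma FM5 (a : ℤ) : (ρF K Δ' G₀ a).comp (ιF K Δ' G₀ a) = LinearMap.id := by
  apply lhom_ext1
  intro F
  simp only [LinearMap.comp_apply, LinearMap.id_apply]
  rw [ιF_single, ρF_single_neg (dlF F) F.2.1.2]
  have h2 : rfaceF (G₀ := G₀) (dlF F) F.2.1.2 = F := Subtype.ext rfl
  rw [h2]

/-- `π ∘ ι = 0`. -/
lemma FM6 (a b : ℤ) (hb : b = a - (G₀.card : ℤ)) :
    (πF K Δ' G₀ hb).comp (ιF K Δ' G₀ a) = 0 := by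
  apply lhom_ext1
  intro F
  simp only [LinearMap.comp_apply, LinearMap.zero_apply]
  rw [ιF_single, πF_single_neg hb (dlF F) F.2.1.2]

lemma neg_one_pow_mul_self (n : ℕ) : ((-1:K) ^ n) * ((-1:K) ^ n) = 1 := by
  rw [← pow_add, ← two_mul, pow_mul]
  norm_num

/-- `π ∘ σ = id`. -/
lemma FM4 {a b : ℤ} (hb : b = a + (G₀.card : ℤ)) (hb' : a = b - (G₀.card : ℤ)) :
    (πF K Δ' G₀ hb').comp (σF K Δ' G₀ hb) = LinearMap.id := by
  apply lhom_ext1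
  intro G
  simp only [LinearMap.comp_apply, LinearMap.id_apply]
  rw [σF_single, map_smul, πF_single_pos hb' (sfaceF hb G) Finset.subset_union_right]
  have h2 : lfaceF hb' (sfaceF hb G) Finset.subset_union_right = G :=
    Subtype.ext (Finset.union_sdiff_cancel_right G.2.1.1)
  rw [h2, smul_smul]
  have h3 : (sfaceF hb G).1 = G.1 ∪ G₀ := rfl
  rw [h3, tau_mul_self, one_smul]

/-- `ι ∘ ρ + σ ∘ π = id`. -/
lemma FM3 {a b : ℤ} (hb : b = a - (G₀.card : ℤ)) (hb' : a = b + (G₀.card : ℤ)) :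
    (ιF K Δ' G₀ a).comp (ρF K Δ' G₀ a) + (σF K Δ' G₀ hb').comp (πF K Δ' G₀ hb) =
      LinearMap.id := by
  apply lhom_ext1
  intro F
  simp only [LinearMap.add_apply, LinearMap.comp_apply, LinearMap.id_apply]
  by_cases h : G₀ ⊆ F.1
  · rw [ρF_single_pos F h, map_zero, πF_single_pos hb F h, map_smul, σF_single, zero_add]
    have hu : (lfaceF hb F h).1 ∪ G₀ = F.1 := Finset.sdiff_union_of_subset h
    have h2 : sfaceF hb' (lfaceF hb F h) = F := Subtype.ext hu
    rw [h2, smul_smul, hu, tau_mul_self, one_smul]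
  · rw [ρF_single_neg F h, πF_single_neg hb F h, map_zero, add_zero, ιF_single]
    have h2 : dlF (rfaceF F h) = F := Subtype.ext rfl
    rw [h2]

end SCP

namespace SCP
open Finsupp

variable {K : Type} [Field K] {Δ' : Set (Finset ℕ)} {G₀ : Finset ℕ}

section FM2defs
variable (K)

open Classical in
noncomputable def wA (hDC : DC Δ') {a b c : ℤ} (hb : b = a - (G₀.card : ℤ)) (hc : c = b - 1)
    (F : SC.facesC Δ' a) (h : G₀ ⊆ F.1) (x : ℕ) : SC.facesC (lkF Δ' G₀) c →₀ K :=
  if h' : x ∈ (lfaceF hb F h).1 then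
    (tau K G₀ F.1 * sgn K (F.1 \ G₀) x) •
      Finsupp.single (dface (DC_lkF hDC) hc (lfaceF hb F h) ⟨x, h'⟩) (1:K)
  else 0

open Classical in
noncomputable def wB (hDC : DC Δ') {a a' c : ℤ} (ha' : a' = a - 1)
    (hc' : c = a' - (G₀.card : ℤ)) (F : SC.facesC Δ' a) (x : ℕ) :
    SC.facesC (lkF Δ' G₀) c →₀ K :=
  if h' : x ∈ F.1 then
    if hG : G₀ ⊆ F.1.erase x then
      ((-1:K) ^ G₀.card * (sgn K F.1 x * tau K G₀ (F.1.erase x))) •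
        Finsupp.single (lfaceF hc' (dface hDC ha' F ⟨x, h'⟩) hG) (1:K)
    else 0
  else 0

end FM2defs

/-- `π` is a chain map up to the sign `(-1)^|G₀|`. -/
lemma FM2 (hDC : DC Δ') {a a' b c : ℤ} (ha' : a' = a - 1) (hb : b = a - (G₀.card : ℤ))
    (hc : c = b - 1) (hc' : c = a' - (G₀.card : ℤ)) :
    (SC.bdry K (lkF Δ' G₀) b c).comp (πF K Δ' G₀ hb) =
      ((-1:K) ^ G₀.card) • ((πF K Δ' G₀ hc').comp (SC.bdry K Δ' a a')) := by
  apply lhom_ext1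
  intro F
  simp only [LinearMap.comp_apply, LinearMap.smul_apply]
  by_cases h : G₀ ⊆ F.1
  · rw [πF_single_pos hb F h, map_smul, bdry_single (DC_lkF hDC) hc (lfaceF hb F h),
      Finset.smul_sum]
    have stepA : ∀ x : {y // y ∈ (lfaceF hb F h).1},
        tau K G₀ F.1 • (sgn K (lfaceF hb F h).1 ↑x • Finsupp.single
          (dface (DC_lkF hDC) hc (lfaceF hb F h) x) (1:K)) = wA K hDC hb hc F h ↑x := by
      intro x
      rw [wA, dif_pos x.2, smul_smul]
      rfl
    rw [Finset.sum_congr rfl (fun x _ => stepA x),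
      Finset.sum_attach ((lfaceF hb F h).1) (wA K hDC hb hc F h), lfaceF_val hb F h]
    -- right-hand side
    rw [bdry_single hDC ha', map_sum, Finset.smul_sum]
    have stepB : ∀ x : {y // y ∈ F.1},
        ((-1:K) ^ G₀.card) • (πF K Δ' G₀ hc'
          (sgn K F.1 ↑x • Finsupp.single (dface hDC ha' F x) (1:K))) =
          wB K hDC ha' hc' F ↑x := by
      intro x
      rw [map_smul]
      by_cases hG : G₀ ⊆ F.1.erase ↑x
      · rw [πF_single_pos hc' _ hG, wB, dif_pos x.2, dif_pos hG, smul_smul, smul_smul,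
          mul_assoc]
        rfl
      · rw [πF_single_neg hc' _ hG, smul_zero, smul_zero, wB, dif_pos x.2, dif_neg hG]
    rw [Finset.sum_congr rfl (fun x _ => stepB x), Finset.sum_attach F.1 (wB K hDC ha' hc' F),
      ← Finset.sum_sdiff h (f := wB K hDC ha' hc' F)]
    have hG0 : ∀ x ∈ G₀, wB (G₀ := G₀) K hDC ha' hc' F x = 0 := by
      intro x hx
      rw [wB, dif_pos (h hx), dif_neg (fun hG => Finset.notMem_erase x F.1 (hG hx))]
    have hpt : ∀ x ∈ F.1 \ G₀, wA K hDC hb hc F h x = wB K hDC ha' hc' F x := by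
      intro x hx
      rw [Finset.mem_sdiff] at hx
      have hxl : x ∈ (lfaceF hb F h).1 := Finset.mem_sdiff.mpr hx
      have hG : G₀ ⊆ F.1.erase x := fun u hu =>
        Finset.mem_erase.mpr ⟨fun he => hx.2 (he ▸ hu), h hu⟩
      rw [wA, dif_pos hxl, wB, dif_pos hx.1, dif_pos hG]
      have h2 : dface (DC_lkF hDC) hc (lfaceF hb F h) ⟨x, hxl⟩ =
          lfaceF hc' (dface hDC ha' F ⟨x, hx.1⟩) hG :=
        Subtype.ext (Finset.erase_sdiff_comm F.1 G₀ x).symm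
      rw [h2, tau_sign h hx.1 hx.2, ← mul_assoc, neg_one_pow_mul_self, one_mul]
    rw [Finset.sum_congr rfl hpt, Finset.sum_congr rfl hG0, Finset.sum_const_zero, add_zero]
  · rw [πF_single_neg hb F h, map_zero, bdry_single hDC ha', map_sum, Finset.smul_sum]
    have stepC : ∀ x : {y // y ∈ F.1},
        ((-1:K) ^ G₀.card) • (πF K Δ' G₀ hc'
          (sgn K F.1 ↑x • Finsupp.single (dface hDC ha' F x) (1:K))) = 0 := by
      intro x
      rw [map_smul, πF_single_neg hc' _
        (fun hG => h (hG.trans (Finset.erase_subset _ F.1))), smul_zero, smul_zero]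
    rw [Finset.sum_congr rfl (fun x _ => stepC x), Finset.sum_const_zero]

end SCP

namespace SCP
open Finsupp

variable {K : Type} [Field K] {Δ' : Set (Finset ℕ)} {G₀ : Finset ℕ}

lemma chaseF {V : Finset ℕ} (hB : BND Δ' V) (hDC' : DC Δ') (c : ℤ)
    (hΔ' : SC.hdim K Δ' c = 0)
    (hΛ : SC.hdim K (lkF Δ' G₀) (c + 1 - (G₀.card : ℤ)) = 0) :
    SC.hdim K (delF Δ' G₀) c = 0 := by
  refine hdim_zero_of_ker_le (BND_delF hB) ?_
  intro z hz
  rw [LinearMap.mem_ker] at hz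
  have hb1 : c + 1 - (G₀.card : ℤ) = (c+1) - (G₀.card : ℤ) := by ring
  have hb2 : c + 2 - (G₀.card : ℤ) = (c+2) - (G₀.card : ℤ) := by ring
  have hb3 : c + 3 - (G₀.card : ℤ) = (c+3) - (G₀.card : ℤ) := by ring
  have hs3 : c + 3 = (c + 3 - (G₀.card : ℤ)) + (G₀.card : ℤ) := by ring
  have hs2 : c + 2 = (c + 2 - (G₀.card : ℤ)) + (G₀.card : ℤ) := by ring
  -- ι z is a cycle in Δ'
  have hFM1 := LinearMap.congr_fun (FM1 (K := K) (G₀ := G₀) hDC' (show c = (c+1) - 1 by ring)) z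
  simp only [LinearMap.comp_apply] at hFM1
  have hcyc : SC.bdry K Δ' (c+1) c (ιF K Δ' G₀ (c+1) z) = 0 := by
    rw [hFM1, hz, map_zero]
  obtain ⟨w', hw'⟩ : ιF K Δ' G₀ (c+1) z ∈ LinearMap.range (SC.bdry K Δ' (c+2) (c+1)) :=
    (ker_eq_range_of_hdim_zero hB hDC' hΔ') ▸ LinearMap.mem_ker.mpr hcyc
  -- π₂ w' is a cycle in the face link
  have hπcyc : SC.bdry K (lkF Δ' G₀) (c+2-(G₀.card : ℤ)) (c+1-(G₀.card : ℤ))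
      (πF K Δ' G₀ hb2 w') = 0 := by
    have hFM2 := LinearMap.congr_fun (FM2 (K := K) hDC' (show c+1 = (c+2) - 1 by ring) hb2
      (show c+1-(G₀.card : ℤ) = (c+2-(G₀.card : ℤ)) - 1 by ring) hb1) w'
    simp only [LinearMap.comp_apply, LinearMap.smul_apply] at hFM2
    rw [hFM2, hw']
    have hFM6 := LinearMap.congr_fun (FM6 (K := K) (Δ' := Δ') (G₀ := G₀) (c+1)
      (c+1-(G₀.card : ℤ)) hb1) z
    simp only [LinearMap.comp_apply, LinearMap.zero_apply] at hFM6
    rw [hFM6, smul_zero]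
  obtain ⟨u, hu⟩ : πF K Δ' G₀ hb2 w' ∈
      LinearMap.range (SC.bdry K (lkF Δ' G₀) (c+3-(G₀.card : ℤ)) (c+2-(G₀.card : ℤ))) :=
    (ker_eq_range_of_hdim_zero' (BND_lkF hB) (DC_lkF hDC')
      (show c+2-(G₀.card : ℤ) = (c + 1 - (G₀.card : ℤ)) + 1 by ring)
      (show c+3-(G₀.card : ℤ) = (c + 1 - (G₀.card : ℤ)) + 2 by ring) hΛ) ▸
      LinearMap.mem_ker.mpr hπcyc
  set w : SC.facesC Δ' (c+2) →₀ K := w' - ((-1:K) ^ G₀.card) •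
    (SC.bdry K Δ' (c+3) (c+2) (σF K Δ' G₀ hs3 u)) with hw
  have hdw : SC.bdry K Δ' (c+2) (c+1) w = ιF K Δ' G₀ (c+1) z := by
    rw [hw, map_sub, map_smul, bdry_bdry hDC' (by ring) (by ring), smul_zero, sub_zero, hw']
  have hπw : πF K Δ' G₀ hb2 w = 0 := by
    have hFM2 := LinearMap.congr_fun (FM2 (K := K) hDC' (show c+2 = (c+3) - 1 by ring) hb3
      (show c+2-(G₀.card : ℤ) = (c+3-(G₀.card : ℤ)) - 1 by ring) hb2) (σF K Δ' G₀ hs3 u)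
    simp only [LinearMap.comp_apply, LinearMap.smul_apply] at hFM2
    have hFM4 := LinearMap.congr_fun (FM4 (K := K) hs3 hb3) u
    simp only [LinearMap.comp_apply, LinearMap.id_apply] at hFM4
    rw [hFM4] at hFM2
    -- hFM2 : ∂Λ u = (-1)^g • π₂ (∂' (σ₃ u))
    rw [hw, map_sub, map_smul, ← hFM2, hu]
    exact sub_self _
  have hFM3 := LinearMap.congr_fun (FM3 (K := K) hb2 hs2) w
  simp only [LinearMap.add_apply, LinearMap.comp_apply, LinearMap.id_apply] at hFM3
  rw [hπw, map_zero, add_zero] at hFM3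
  -- hFM3 : ι (ρ w) = w
  refine ⟨ρF K Δ' G₀ (c+2) w, ?_⟩
  have hFM1' := LinearMap.congr_fun (FM1 (K := K) (G₀ := G₀) hDC'
    (show c+1 = (c+2) - 1 by ring)) (ρF K Δ' G₀ (c+2) w)
  simp only [LinearMap.comp_apply] at hFM1'
  have hι : ιF K Δ' G₀ (c+1) (SC.bdry K (delF Δ' G₀) (c+2) (c+1) (ρF K Δ' G₀ (c+2) w)) =
      ιF K Δ' G₀ (c+1) z := by
    rw [← hFM1', hFM3, hdw]
  have hFM5a := LinearMap.congr_fun (FM5 (K := K) (Δ' := Δ') (G₀ := G₀) (c+1))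
    (SC.bdry K (delF Δ' G₀) (c+2) (c+1) (ρF K Δ' G₀ (c+2) w))
  have hFM5b := LinearMap.congr_fun (FM5 (K := K) (Δ' := Δ') (G₀ := G₀) (c+1)) z
  simp only [LinearMap.comp_apply, LinearMap.id_apply] at hFM5a hFM5b
  rw [← hFM5a, ← hFM5b, hι]

end SCP

namespace SCP
open Finsupp

variable {K : Type} [Field K]

def ΔOf (V : Finset ℕ) (𝒢 : Finset (Finset ℕ)) : Set (Finset ℕ) :=
  {F | F ⊆ V ∧ ∀ G ∈ 𝒢, ¬ G ⊆ F}

lemma DC_ΔOf {V : Finset ℕ} {𝒢 : Finset (Finset ℕ)} : DC (ΔOf V 𝒢) := fun F hF x =>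
  ⟨(Finset.erase_subset x F).trans hF.1,
    fun G hG hsub => hF.2 G hG (hsub.trans (Finset.erase_subset x F))⟩

lemma BND_ΔOf {V : Finset ℕ} {𝒢 : Finset (Finset ℕ)} : BND (ΔOf V 𝒢) V := fun _ hF => hF.1

lemma cone_ΔOf {V : Finset ℕ} {𝒢 : Finset (Finset ℕ)} {v : ℕ} (hv : v ∈ V)
    (hunc : ∀ G ∈ 𝒢, v ∉ G) : Cone (ΔOf V 𝒢) v := by
  intro F hF
  refine ⟨Finset.insert_subset hv hF.1, fun G hG hsub => hF.2 G hG ?_⟩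
  intro x hx
  rcases Finset.mem_insert.mp (hsub hx) with h | h
  · exact absurd (h ▸ hx) (hunc G hG)
  · exact h

lemma delF_ΔOf {V : Finset ℕ} {𝒢 : Finset (Finset ℕ)} {G₀ : Finset ℕ} (hG₀ : G₀ ∈ 𝒢) :
    ΔOf V 𝒢 = delF (ΔOf V (𝒢.erase G₀)) G₀ := by
  ext F
  constructor
  · intro hF
    exact ⟨⟨hF.1, fun G hG => hF.2 G (Finset.mem_of_mem_erase hG)⟩, hF.2 G₀ hG₀⟩
  · intro hF
    refine ⟨hF.1.1, fun G hG hsub => ?_⟩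
    by_cases hGG : G = G₀
    · exact hF.2 (hGG ▸ hsub)
    · exact hF.1.2 G (Finset.mem_erase.mpr ⟨hGG, hG⟩) hsub

lemma lkF_ΔOf {V : Finset ℕ} {𝒢 : Finset (Finset ℕ)} {G₀ : Finset ℕ}
    (hG₀V : G₀ ⊆ V) :
    lkF (ΔOf V (𝒢.erase G₀)) G₀ =
      ΔOf (V \ G₀) ((𝒢.erase G₀).image (fun G => G \ G₀)) := by
  ext F
  constructor
  · rintro ⟨hdisj, hsubV, hgen⟩
    constructor
    · intro x hx
      exact Finset.mem_sdiff.mpr ⟨hsubV (Finset.mem_union_left _ hx),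
        Finset.disjoint_left.mp hdisj hx⟩
    · intro H hH hHF
      obtain ⟨G, hG, rfl⟩ := Finset.mem_image.mp hH
      refine hgen G hG ?_
      intro x hx
      by_cases hxG : x ∈ G₀
      · exact Finset.mem_union_right _ hxG
      · exact Finset.mem_union_left _ (hHF (Finset.mem_sdiff.mpr ⟨hx, hxG⟩))
  · rintro ⟨hsub, hgen⟩
    have hdisj : Disjoint F G₀ := Finset.disjoint_left.mpr
      (fun {x} hx => (Finset.mem_sdiff.mp (hsub hx)).2)
    refine ⟨hdisj, Finset.union_subset (fun x hx => (Finset.mem_sdiff.mp (hsub hx)).1) hG₀V,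
      fun G hG hsub2 => ?_⟩
    refine hgen (G \ G₀) (Finset.mem_image_of_mem _ hG) ?_
    intro x hx
    rw [Finset.mem_sdiff] at hx
    rcases Finset.mem_union.mp (hsub2 hx.1) with h | h
    · exact h
    · exact absurd h hx.2

/-- The main induction: Taylor-type bound via Hochster complexes. -/
theorem lemT : ∀ (n : ℕ) (𝒢 : Finset (Finset ℕ)), 𝒢.card ≤ n → ∀ (V : Finset ℕ),
    (∀ G ∈ 𝒢, G ⊆ V) → ∀ (i : ℕ),
    SC.hdim K (ΔOf V 𝒢) ((V.card : ℤ) - i - 1) ≠ 0 →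
    ∃ S ⊆ 𝒢, S.card ≤ i ∧ V.card ≤ ∑ G ∈ S, G.card := by
  intro n
  induction n with
  | zero =>
    intro 𝒢 h𝒢 V hGV i h
    have h0 : 𝒢 = ∅ := Finset.card_eq_zero.mp (Nat.le_zero.mp h𝒢)
    subst h0
    by_cases hV : V = ∅
    · exact ⟨∅, Finset.empty_subset _, by simp, by simp [hV]⟩
    · obtain ⟨v, hv⟩ := Finset.nonempty_iff_ne_empty.mpr hV
      exact absurd (cone_hdim_zero (BND_ΔOf) (DC_ΔOf)
        (cone_ΔOf hv (fun G hG => absurd hG (Finset.notMem_empty G))) _) h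
  | succ n ih =>
    intro 𝒢 h𝒢 V hGV i h
    by_cases hV : V = ∅
    · exact ⟨∅, Finset.empty_subset _, by simp, by simp [hV]⟩
    by_cases hunc : ∃ v ∈ V, ∀ G ∈ 𝒢, v ∉ G
    · obtain ⟨v, hv, hu⟩ := hunc
      exact absurd (cone_hdim_zero (BND_ΔOf) (DC_ΔOf) (cone_ΔOf hv hu) _) h
    push_neg at hunc
    obtain ⟨v₀, hv₀⟩ := Finset.nonempty_iff_ne_empty.mpr hV
    obtain ⟨G₀, hG₀, _⟩ := hunc v₀ hv₀
    by_cases hemp : ∅ ∈ 𝒢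
    · refine absurd (hdim_zero_of_no_faces ⟨fun F => ?_⟩) h
      exact F.2.1.2 ∅ hemp (Finset.empty_subset _)
    rcases Nat.eq_zero_or_pos i with hi0 | hip
    · subst hi0
      refine absurd (hdim_zero_of_no_faces ⟨fun F => ?_⟩) h
      have hc := F.2.2
      have hcard : F.1.card = V.card := by omega
      have hFV : F.1 = V :=
        Finset.eq_of_subset_of_card_le F.2.1.1 (le_of_eq hcard.symm)
      refine F.2.1.2 G₀ hG₀ ?_
      rw [hFV]
      exact hGV G₀ hG₀
    -- main case
    have hG₀V : G₀ ⊆ V := hGV G₀ hG₀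
    have hdelid := delF_ΔOf (V := V) hG₀
    rw [hdelid] at h
    have hcard_erase : (𝒢.erase G₀).card ≤ n := by
      have := Finset.card_erase_of_mem hG₀
      have h1 : 1 ≤ 𝒢.card := Finset.card_pos.mpr ⟨G₀, hG₀⟩
      omega
    by_cases hA : SC.hdim K (ΔOf V (𝒢.erase G₀)) ((V.card : ℤ) - i - 1) ≠ 0
    · obtain ⟨S, hSsub, hScard, hSsum⟩ := ih (𝒢.erase G₀) hcard_erase V
        (fun G hG => hGV G (Finset.mem_of_mem_erase hG)) i hA
      exact ⟨S, hSsub.trans (Finset.erase_subset G₀ 𝒢), hScard, hSsum⟩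
    by_cases hBc : SC.hdim K (lkF (ΔOf V (𝒢.erase G₀)) G₀)
        ((V.card : ℤ) - i - 1 + 1 - (G₀.card : ℤ)) ≠ 0
    · rw [lkF_ΔOf hG₀V] at hBc
      have hle : G₀.card ≤ V.card := Finset.card_le_card hG₀V
      have hidx : (((V \ G₀).card : ℕ) : ℤ) - ((i - 1 : ℕ) : ℤ) - 1 =
          (V.card : ℤ) - i - 1 + 1 - (G₀.card : ℤ) := by
        rw [Finset.card_sdiff_of_subset hG₀V]
        omega
      rw [← hidx] at hBc
      have himcard : ((𝒢.erase G₀).image (fun G => G \ G₀)).card ≤ n :=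
        (Finset.card_image_le).trans hcard_erase
      have himsub : ∀ H ∈ (𝒢.erase G₀).image (fun G => G \ G₀), H ⊆ V \ G₀ := by
        intro H hH
        obtain ⟨G, hG, rfl⟩ := Finset.mem_image.mp hH
        exact Finset.sdiff_subset_sdiff (hGV G (Finset.mem_of_mem_erase hG)) (le_refl G₀)
      obtain ⟨S', hS'sub, hS'card, hS'sum⟩ := ih _ himcard (V \ G₀) himsub (i - 1) hBc
      -- lift the generators of the link
      have hmem : ∀ H : {H // H ∈ S'}, ∃ G ∈ 𝒢.erase G₀, G \ G₀ = H.1 := fun H =>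
        Finset.mem_image.mp (hS'sub H.2)
      classical
      set f : {H // H ∈ S'} → Finset ℕ := fun H => (hmem H).choose with hf
      have hfmem : ∀ H, f H ∈ 𝒢.erase G₀ := fun H => (hmem H).choose_spec.1
      have hfval : ∀ H, (f H) \ G₀ = H.1 := fun H => (hmem H).choose_spec.2
      have hinj : Function.Injective f := by
        intro a b hab
        apply Subtype.ext
        rw [← hfval a, ← hfval b, hab]
      refine ⟨insert G₀ (S'.attach.image f), ?_, ?_, ?_⟩
      · apply Finset.insert_subset hG₀
        intro G hG
        obtain ⟨H, _, rfl⟩ := Finset.mem_image.mp hG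
        exact Finset.mem_of_mem_erase (hfmem H)
      · have hni : G₀ ∉ S'.attach.image f := by
          intro hcon
          obtain ⟨H, _, hfe⟩ := Finset.mem_image.mp hcon
          exact (Finset.mem_erase.mp (hfmem H)).1 hfe
        rw [Finset.card_insert_of_notMem hni]
        have himc : (S'.attach.image f).card ≤ S'.card := by
          refine le_trans (Finset.card_image_le) ?_
          rw [Finset.card_attach]
        omega
      · have hni : G₀ ∉ S'.attach.image f := by
          intro hcon
          obtain ⟨H, _, hfe⟩ := Finset.mem_image.mp hcon
          exact (Finset.mem_erase.mp (hfmem H)).1 hfe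
        rw [Finset.sum_insert hni, Finset.sum_image (fun a _ b _ hab => hinj hab)]
        have hterm : ∀ H ∈ S'.attach, H.1.card ≤ (f H).card := by
          intro H _
          rw [← hfval H]
          exact Finset.card_le_card (Finset.sdiff_subset)
        have hsum2 : ∑ H ∈ S'.attach, H.1.card ≤ ∑ H ∈ S'.attach, (f H).card :=
          Finset.sum_le_sum hterm
        have hsum3 : ∑ H ∈ S'.attach, H.1.card = ∑ H ∈ S', H.card :=
          Finset.sum_attach S' (fun H => H.card)
        have hcs : (V \ G₀).card = V.card - G₀.card := Finset.card_sdiff_of_subset hG₀V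
        have hle : G₀.card ≤ V.card := Finset.card_le_card hG₀V
        omega
    · rw [not_not] at hA hBc
      exact absurd (chaseF (BND_ΔOf) (DC_ΔOf) _ hA hBc) h

end SCP

open SCP

/-- Theorem 5.4(1). If `2 ≤ t ≤ n`, `n = (t+1)p + d`, `0 ≤ d ≤ t`,
`i ≤ j < n` and `β_{i,j}(R/I_t(C_n)) ≠ 0`, then `j ≤ it`. -/
theorem nonzero_betti_j_le_it (K : Type) [Field K] (n t p d i j : ℕ) (ht2 : 2 ≤ t)
    (htn : t ≤ n) (hd : d ≤ t) (hn : n = (t + 1) * p + d) (hij : i ≤ j) (hjn : j < n)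
    (hb : bettiCycle K n t i j ≠ 0) : j ≤ i * t := by
  rw [bettiCycle, betti] at hb
  obtain ⟨W, hWmem, hne⟩ := Finset.exists_ne_zero_of_sum_ne_zero hb
  rw [Finset.mem_powersetCard] at hWmem
  obtain ⟨hWsub, hWcard⟩ := hWmem
  have hid : {F | F ∈ SRcomplex n (cycFacets n t) ∧ F ⊆ W} =
      ΔOf W ((cycFacets n t).filter (fun G => G ⊆ W)) := by
    ext F
    constructor
    · rintro ⟨⟨hFr, hFg⟩, hFW⟩
      refine ⟨hFW, fun G hG hGF => hFg ⟨G, (Finset.mem_filter.mp hG).1, hGF⟩⟩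
    · rintro ⟨hFW, hFg⟩
      refine ⟨⟨hFW.trans hWsub, ?_⟩, hFW⟩
      rintro ⟨G, hG, hGF⟩
      exact hFg G (Finset.mem_filter.mpr ⟨hG, hGF.trans hFW⟩) hGF
  rw [hid] at hne
  have hidx : (j : ℤ) - i - 1 = ((W.card : ℕ) : ℤ) - i - 1 := by rw [hWcard]
  rw [hidx] at hne
  obtain ⟨S, hSsub, hScard, hSsum⟩ := lemT ((cycFacets n t).filter (fun G => G ⊆ W)).card
    ((cycFacets n t).filter (fun G => G ⊆ W)) le_rfl W
    (fun G hG => (Finset.mem_filter.mp hG).2) i hne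
  have hcardG : ∀ G ∈ S, G.card ≤ t := by
    intro G hG
    have hG2 := (Finset.mem_filter.mp (hSsub hG)).1
    rw [cycFacets] at hG2
    obtain ⟨a, _, rfl⟩ := Finset.mem_image.mp hG2
    rw [cycForm]
    exact le_trans (Finset.card_image_le) (by rw [Finset.card_range])
  have hsum : ∑ G ∈ S, G.card ≤ S.card * t := by
    have := Finset.sum_le_card_nsmul S (fun G => G.card) t hcardG
    simpa [smul_eq_mul] using this
  have : W.card ≤ i * t := le_trans hSsum (le_trans hsum (Nat.mul_le_mul_right t hScard))
  omega
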